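/- Let s = (s₁,s₂,s₃) ∈ ℝ³ with s₁,s₂,s₃ > 0. Then the following are equivalent: (i) p_r(s) ≥ 0 for all r = 1,2,3; (ii) there exist a = (a₁,a₂,a₃) ∈ ℝ³ and b = (b₁,b₂,b₃) ∈ ℝ³ such that for all r = 1,2,3 (indices mod 3): the 2×2 symmetric matrix B_r(s,a,b) is positive semidefinite, s_{r+1} + s_{r+2} - s_r + S(s)/(2s_r) + 3a_r ≥ 0, and a_r ≤ a_r⁰(s). (This is the matrix-level statement that g_s on W¹² has strongly nonnegative curvature if and only if it has sec ≥ 0.) -/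

import Mathlib

open Matrix

/-- `S(s) = 2(s₁s₂+s₁s₃+s₂s₃) - (s₁²+s₂²+s₃²)`. -/
noncomputable def Spoly (s : Fin 3 → ℝ) : ℝ :=
  2 * (s 0 * s 1 + s 0 * s 2 + s 1 * s 2) - (s 0 ^ 2 + s 1 ^ 2 + s 2 ^ 2)

/-- `p_r(s) = (s_{r+1}-s_{r+2})² + 2 s_r (s_{r+1}+s_{r+2}) - 3 s_r²`, indices mod 3. -/
noncomputable def ppoly (s : Fin 3 → ℝ) (r : Fin 3) : ℝ :=
  (s (r + 1) - s (r + 2)) ^ 2 + 2 * s r * (s (r + 1) + s (r + 2)) - 3 * s r ^ 2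

/-- `a_r⁰(s) = ((s_{r+1}-s_{r+2})² - s_r²)/(2 s_r)`, indices mod 3. -/
noncomputable def a0 (s : Fin 3 → ℝ) (r : Fin 3) : ℝ :=
  ((s (r + 1) - s (r + 2)) ^ 2 - s r ^ 2) / (2 * s r)

/-- The `r`-th 2×2 block `B_r(s,a,b)` of the modified curvature operator of `(W¹², g_s)`. -/
noncomputable def Bmat (s a b : Fin 3 → ℝ) (r : Fin 3) : Matrix (Fin 2) (Fin 2) ℝ :=
  !![4 * s (r + 1) - b (r + 1),   -Spoly s / s r + 2 * a r;
     -Spoly s / s r + 2 * a r,    4 * s (r + 2) + b (r + 2)]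

/-- A symmetric 2×2 real matrix with nonnegative diagonal and nonnegative
determinant is positive semidefinite. -/
lemma psd2 (A B c : ℝ) (hA : 0 ≤ A) (hB : 0 ≤ B) (h : c ^ 2 ≤ A * B) :
    (!![A, c; c, B]).PosSemidef := by
  rw [Matrix.posSemidef_iff_dotProduct_mulVec]
  constructor
  · ext i j
    fin_cases i <;> fin_cases j <;> simp [Matrix.conjTranspose_apply]
  · intro v
    have hq : star v ⬝ᵥ (!![A, c; c, B]).mulVec v
        = A * (v 0) ^ 2 + 2 * c * (v 0) * (v 1) + B * (v 1) ^ 2 := by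
      simp [Matrix.mulVec, dotProduct, Fin.sum_univ_two]
      ring
    rw [hq]
    rcases eq_or_lt_of_le hA with hA0 | hA0
    · have hc : c = 0 := by nlinarith [sq_nonneg c]
      subst hc
      nlinarith [mul_nonneg hB (sq_nonneg (v 1)), sq_nonneg (v 0)]
    · nlinarith [sq_nonneg (A * (v 0) + c * (v 1)),
        mul_nonneg (sub_nonneg.2 h) (sq_nonneg (v 1)), hA0]

/-- If `p ≥ 0` then `√x ≤ √y + √z`, in the squared form `x ≤ y + z + 2√(yz)`. -/
lemma sqrt_triangle (x y z w : ℝ) (hx : 0 < x) (hy : 0 < y) (hz : 0 < z)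
    (hw : 0 ≤ w) (hw2 : w ^ 2 = y * z)
    (h1 : 0 ≤ (y - z) ^ 2 + 2 * x * (y + z) - 3 * x ^ 2) :
    x ≤ y + z + 2 * w := by
  nlinarith [sq_nonneg (y - z), mul_nonneg hw (by positivity : (0:ℝ) ≤ y + z),
    sq_nonneg (x - (y + z + 2 * w)), mul_pos hy hz, sq_nonneg (y + z - 2 * w)]

/-- The determinant bound in the branch where the off-diagonal entry is nonpositive. -/
lemma det_bound (x y z w : ℝ) (hx : 0 < x) (hy : 0 < y) (hz : 0 < z)
    (hw : 0 ≤ w) (hw2 : w ^ 2 = y * z) (hxle : x ≤ y + z + 2 * w)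
    (hc : (y - z) ^ 2 ≤ x * (y + z)) :
    (x * (y + z) - (y - z) ^ 2) ^ 2 ≤ 4 * x ^ 2 * (y * z) := by
  have h4 : 0 ≤ y + z - 2 * w := by nlinarith [sq_nonneg (y - z), sq_nonneg (y + z - 2 * w)]
  have h5 : x * (y + z) - (y - z) ^ 2 ≤ 2 * x * w := by
    nlinarith [mul_nonneg h4 (by linarith : 0 ≤ y + z + 2 * w - x)]
  have hb : 0 ≤ x * (y + z) - (y - z) ^ 2 := by linarith
  have := pow_le_pow_left₀ hb h5 2
  nlinarith [this, sq_nonneg w]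

/-- `T ≥ 0` : consequence of all three `p_r ≥ 0`. -/
lemma T_nonneg (x y z : ℝ) (hx : 0 < x) (hy : 0 < y) (hz : 0 < z)
    (h1 : 0 ≤ (y - z) ^ 2 + 2 * x * (y + z) - 3 * x ^ 2)
    (h2 : 0 ≤ (z - x) ^ 2 + 2 * y * (z + x) - 3 * y ^ 2)
    (h3 : 0 ≤ (x - y) ^ 2 + 2 * z * (x + y) - 3 * z ^ 2) :
    2 * (y - z) ^ 2 + 3 * x ^ 2 ≤ 5 * x * (y + z) := by
  nlinarith [sq_nonneg (y - z), sq_nonneg (y + z - 2 * x), mul_pos hy hz, mul_pos hx hy,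
    mul_pos hx hz, sq_nonneg (x - y), sq_nonneg (x - z), mul_nonneg h2 h3,
    mul_nonneg hx.le h1, mul_nonneg hy.le h2, mul_nonneg hz.le h3]

/-- Key construction lemma: with `a = min(a⁰, S/(2x))` and `b = 0` all three
conditions of (ii) hold at the given index. -/
lemma key (x y z S : ℝ) (hx : 0 < x) (hy : 0 < y) (hz : 0 < z)
    (h1 : 0 ≤ (y - z) ^ 2 + 2 * x * (y + z) - 3 * x ^ 2)
    (h2 : 0 ≤ (z - x) ^ 2 + 2 * y * (z + x) - 3 * y ^ 2)
    (h3 : 0 ≤ (x - y) ^ 2 + 2 * z * (x + y) - 3 * z ^ 2)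
    (hS : S = 2 * (x * y + x * z + y * z) - (x ^ 2 + y ^ 2 + z ^ 2)) :
    (!![4 * y - 0, -S / x + 2 * min (((y - z) ^ 2 - x ^ 2) / (2 * x)) (S / (2 * x));
        -S / x + 2 * min (((y - z) ^ 2 - x ^ 2) / (2 * x)) (S / (2 * x)),
        4 * z + 0]).PosSemidef ∧
      0 ≤ y + z - x + S / (2 * x)
          + 3 * min (((y - z) ^ 2 - x ^ 2) / (2 * x)) (S / (2 * x)) ∧
      min (((y - z) ^ 2 - x ^ 2) / (2 * x)) (S / (2 * x))
        ≤ ((y - z) ^ 2 - x ^ 2) / (2 * x) := by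
  set w := Real.sqrt (y * z) with hwdef
  have hw : 0 ≤ w := Real.sqrt_nonneg _
  have hw2 : w ^ 2 = y * z := Real.sq_sqrt (by positivity)
  have hxle : x ≤ y + z + 2 * w := sqrt_triangle x y z w hx hy hz hw hw2 h1
  refine ⟨?_, ?_, min_le_left _ _⟩
  · -- positive semidefiniteness
    apply psd2
    · linarith
    · linarith
    · rcases le_total (((y - z) ^ 2 - x ^ 2) / (2 * x)) (S / (2 * x)) with hm | hm
      · -- min = a⁰ branch, off-diagonal ≤ 0
        rw [min_eq_left hm]
        have hm' : (y - z) ^ 2 - x ^ 2 ≤ S :=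
          (div_le_div_iff_of_pos_right (by positivity)).1 hm
        have hc : (y - z) ^ 2 ≤ x * (y + z) := by nlinarith [hm', hS]
        have hd := det_bound x y z w hx hy hz hw hw2 hxle hc
        have hceq : -S / x + 2 * (((y - z) ^ 2 - x ^ 2) / (2 * x))
            = -((x * (y + z) - (y - z) ^ 2) * 2) / x := by
          rw [hS]; field_simp; ring
        rw [hceq, div_pow, div_le_iff₀ (by positivity : (0:ℝ) < x ^ 2)]
        nlinarith [hd]
      · -- min = S/(2x) branch, off-diagonal = 0
        rw [min_eq_right hm]
        have hceq : -S / x + 2 * (S / (2 * x)) = 0 := by field_simp; ring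
        rw [hceq]
        nlinarith [mul_pos hy hz]
  · -- the linear condition
    rcases le_total (((y - z) ^ 2 - x ^ 2) / (2 * x)) (S / (2 * x)) with hm | hm
    · rw [min_eq_left hm]
      have heq : y + z - x + S / (2 * x) + 3 * (((y - z) ^ 2 - x ^ 2) / (2 * x))
          = ((y - z) ^ 2 + 2 * x * (y + z) - 3 * x ^ 2) / x := by
        rw [hS]; field_simp; ring
      rw [heq]
      positivity
    · rw [min_eq_right hm]
      have hT := T_nonneg x y z hx hy hz h1 h2 h3
      have heq : y + z - x + S / (2 * x) + 3 * (S / (2 * x))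
          = (5 * x * (y + z) - 3 * x ^ 2 - 2 * (y - z) ^ 2) / x := by
        rw [hS]; field_simp; ring
      rw [heq]
      apply div_nonneg (by linarith) hx.le

/-- Condition (ii) at index `r` implies `p_r ≥ 0`. -/
lemma back (x y z S A : ℝ) (hx : 0 < x)
    (hS : S = 2 * (x * y + x * z + y * z) - (x ^ 2 + y ^ 2 + z ^ 2))
    (hlin : 0 ≤ y + z - x + S / (2 * x) + 3 * A)
    (hle : A ≤ ((y - z) ^ 2 - x ^ 2) / (2 * x)) :
    0 ≤ (y - z) ^ 2 + 2 * x * (y + z) - 3 * x ^ 2 := by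
  have h4 : 0 ≤ y + z - x + S / (2 * x) + 3 * (((y - z) ^ 2 - x ^ 2) / (2 * x)) := by
    linarith
  have heq : (y - z) ^ 2 + 2 * x * (y + z) - 3 * x ^ 2
      = x * (y + z - x + S / (2 * x) + 3 * (((y - z) ^ 2 - x ^ 2) / (2 * x))) := by
    rw [hS]; field_simp; ring
  rw [heq]
  exact mul_nonneg hx.le h4

/-- Matrix-level statement: `g_s` on `W¹²` has strongly nonnegative curvature iff it
has `sec ≥ 0`. -/
theorem stronglyNonneg_W12_iff (s : Fin 3 → ℝ) (hs : ∀ r, 0 < s r) :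
    (∀ r, 0 ≤ ppoly s r) ↔
      ∃ a b : Fin 3 → ℝ, ∀ r : Fin 3,
        (Bmat s a b r).PosSemidef ∧
        0 ≤ s (r + 1) + s (r + 2) - s r + Spoly s / (2 * s r) + 3 * a r ∧
        a r ≤ a0 s r := by
  constructor
  · -- (i) → (ii)
    intro h
    refine ⟨fun r => min (a0 s r) (Spoly s / (2 * s r)), 0, ?_⟩
    intro r
    have h0 : 0 ≤ (s 1 - s 2) ^ 2 + 2 * s 0 * (s 1 + s 2) - 3 * s 0 ^ 2 := by
      simpa [ppoly] using h 0
    have h1 : 0 ≤ (s 2 - s 0) ^ 2 + 2 * s 1 * (s 2 + s 0) - 3 * s 1 ^ 2 := by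
      simpa [ppoly] using h 1
    have h2 : 0 ≤ (s 0 - s 1) ^ 2 + 2 * s 2 * (s 0 + s 1) - 3 * s 2 ^ 2 := by
      simpa [ppoly] using h 2
    fin_cases r
    · have := key (s 0) (s 1) (s 2) (Spoly s) (hs 0) (hs 1) (hs 2) h0 h1 h2
        (by unfold Spoly; ring)
      simpa [Bmat, a0] using this
    · have := key (s 1) (s 2) (s 0) (Spoly s) (hs 1) (hs 2) (hs 0) h1 h2 h0
        (by unfold Spoly; ring)
      simpa [Bmat, a0] using this
    · have := key (s 2) (s 0) (s 1) (Spoly s) (hs 2) (hs 0) (hs 1) h2 h0 h1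
        (by unfold Spoly; ring)
      simpa [Bmat, a0] using this
  · -- (ii) → (i)
    rintro ⟨a, b, hab⟩ r
    fin_cases r
    · obtain ⟨-, hlin, hle⟩ := hab 0
      have := back (s 0) (s 1) (s 2) (Spoly s) (a 0) (hs 0)
        (by unfold Spoly; ring) (by simpa using hlin) (by simpa [a0] using hle)
      simpa [ppoly] using this
    · obtain ⟨-, hlin, hle⟩ := hab 1
      have := back (s 1) (s 2) (s 0) (Spoly s) (a 1) (hs 1)
        (by unfold Spoly; ring) (by simpa using hlin) (by simpa [a0] using hle)
      simpa [ppoly] using this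
    · obtain ⟨-, hlin, hle⟩ := hab 2
      have := back (s 2) (s 0) (s 1) (Spoly s) (a 2) (hs 2)
        (by unfold Spoly; ring) (by simpa using hlin) (by simpa [a0] using hle)
      simpa [ppoly] using this
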